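/- Let A be a real n×d matrix of full column rank, p > 2, and let w ∈ ℝ^n be strictly positive with w_i ≥ σ(W^{1/2−1/p}A)_i for all i, where W = diag(w). Let D be an n×n diagonal matrix with D ⪰ W^{1−2/p} (Loewner order), let v ∈ ℝ^n be entrywise nonnegative with (Σ_i v_i^{p/(p−2)})^{(p−2)/p} ≤ 1, and set V = diag(v). Let g ∈ ℝ^d be nonzero, define ℰ = inf{ x^⊤A^⊤DAx : g^⊤x = −1 }, ℰ^new = inf{ x^⊤A^⊤(D+V)Ax : g^⊤x = −1 }, and y = −(g^⊤(A^⊤DA)^{−1}g)^{−1}(A^⊤DA)^{−1}g (the minimizer of the first infimum). Then ℰ^new − ℰ ≥ (1/2)·Σ_{i∈[n]} v_i(Ay)_i^2. -/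

import Mathlib

open Matrix Finset

/-- Leverage score of row `i` of matrix `M`: `σ(M)_i = m_i^⊤ (M^⊤ M)⁻¹ m_i`. -/
noncomputable def levScore {n d : ℕ} (M : Matrix (Fin n) (Fin d) ℝ) (i : Fin n) : ℝ :=
  M i ⬝ᵥ ((Mᵀ * M)⁻¹ *ᵥ M i)


lemma dot_sym {d : ℕ} {Q : Matrix (Fin d) (Fin d) ℝ} (hQ : Qᵀ = Q) (u z : Fin d → ℝ) :
    z ⬝ᵥ (Q *ᵥ u) = u ⬝ᵥ (Q *ᵥ z) := by
  rw [Matrix.dotProduct_mulVec]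
  conv_lhs => rw [← hQ]
  rw [Matrix.vecMul_transpose, dotProduct_comm]

lemma quad_eq {n d : ℕ} (A : Matrix (Fin n) (Fin d) ℝ) (D : Fin n → ℝ) (x z : Fin d → ℝ) :
    x ⬝ᵥ ((Aᵀ * Matrix.diagonal D * A) *ᵥ z) = ∑ i, D i * ((A *ᵥ x) i * (A *ᵥ z) i) := by
  rw [Matrix.mul_assoc, ← Matrix.mulVec_mulVec, Matrix.dotProduct_mulVec,
    Matrix.vecMul_transpose, ← Matrix.mulVec_mulVec]
  simp only [dotProduct, Matrix.mulVec_diagonal]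
  exact Finset.sum_congr rfl fun i _ => by ring

lemma psd_cs {d : ℕ} {Q : Matrix (Fin d) (Fin d) ℝ} (hQ : Q.PosSemidef) (hQs : Qᵀ = Q)
    (u z : Fin d → ℝ) :
    (u ⬝ᵥ (Q *ᵥ z)) ^ 2 ≤ (u ⬝ᵥ (Q *ᵥ u)) * (z ⬝ᵥ (Q *ᵥ z)) := by
  have key : ∀ t : ℝ,
      0 ≤ (z ⬝ᵥ (Q *ᵥ z)) * (t * t) + (2 * (u ⬝ᵥ (Q *ᵥ z))) * t + u ⬝ᵥ (Q *ᵥ u) := by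
    intro t
    have h0 := hQ.dotProduct_mulVec_nonneg (u + t • z)
    simp only [star_trivial] at h0
    have hexp : (u + t • z) ⬝ᵥ (Q *ᵥ (u + t • z)) =
        (z ⬝ᵥ (Q *ᵥ z)) * (t * t) + (2 * (u ⬝ᵥ (Q *ᵥ z))) * t + u ⬝ᵥ (Q *ᵥ u) := by
      simp only [Matrix.mulVec_add, Matrix.mulVec_smul, dotProduct_add, add_dotProduct,
        dotProduct_smul, smul_dotProduct, smul_eq_mul, dot_sym hQs z u]
      ring
    linarith [hexp ▸ h0]
  have hd := discrim_le_zero key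
  rw [discrim] at hd
  nlinarith [hd]

lemma sym_form {n d : ℕ} (A : Matrix (Fin n) (Fin d) ℝ) (B : Fin n → ℝ) :
    (Aᵀ * Matrix.diagonal B * A)ᵀ = Aᵀ * Matrix.diagonal B * A := by
  rw [Matrix.transpose_mul, Matrix.transpose_mul, Matrix.transpose_transpose,
    Matrix.diagonal_transpose, Matrix.mul_assoc]

lemma posdef_form {n d : ℕ} {A : Matrix (Fin n) (Fin d) ℝ}
    (hinj : ∀ x : Fin d → ℝ, A *ᵥ x = 0 → x = 0)
    {B : Fin n → ℝ} (hB : ∀ i, 0 < B i) :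
    (Aᵀ * Matrix.diagonal B * A).PosDef := by
  refine Matrix.PosDef.of_dotProduct_mulVec_pos ?_ ?_
  · rw [Matrix.IsHermitian, conjTranspose_eq_transpose_of_trivial, sym_form]
  · intro x hx
    simp only [star_trivial]
    rw [quad_eq]
    have hAx : A *ᵥ x ≠ 0 := fun h => hx (hinj x h)
    obtain ⟨i, hi⟩ := Function.ne_iff.mp hAx
    simp only [Pi.zero_apply] at hi
    refine Finset.sum_pos' (fun j _ => mul_nonneg (hB j).le (mul_self_nonneg _)) ⟨i, mem_univ i, ?_⟩
    exact mul_pos (hB i) (mul_self_pos.mpr hi)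

lemma key_ineq {n d : ℕ} (A : Matrix (Fin n) (Fin d) ℝ) {p : ℝ} (hp : 2 < p)
    {w : Fin n → ℝ} (hw : ∀ i, 0 < w i)
    (hσ : ∀ i, levScore (Matrix.diagonal (fun j => w j ^ ((1:ℝ)/2 - 1/p)) * A) i ≤ w i)
    {v : Fin n → ℝ} (hv : ∀ i, 0 ≤ v i)
    (hvnorm : (∑ i, v i ^ (p / (p - 2))) ^ ((p - 2)/p) ≤ 1)
    (hinj : ∀ x : Fin d → ℝ, A *ᵥ x = 0 → x = 0)
    (z : Fin d → ℝ) :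
    ∑ i, v i * ((A *ᵥ z) i) ^ 2 ≤ ∑ i, w i ^ ((1:ℝ) - 2/p) * ((A *ᵥ z) i) ^ 2 := by
  have hp0 : (0:ℝ) < p := by linarith
  have hp2 : (0:ℝ) < p - 2 := by linarith
  set M : Matrix (Fin n) (Fin d) ℝ :=
    Matrix.diagonal (fun j => w j ^ ((1:ℝ)/2 - 1/p)) * A with hM
  set az : Fin n → ℝ := A *ᵥ z with haz
  have hMv : ∀ (x : Fin d → ℝ) (i : Fin n),
      (M *ᵥ x) i = w i ^ ((1:ℝ)/2 - 1/p) * (A *ᵥ x) i := by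
    intro x i
    rw [hM, ← Matrix.mulVec_mulVec, Matrix.mulVec_diagonal]
  have hff : (fun i => w i ^ ((1:ℝ)/2 - 1/p) * w i ^ ((1:ℝ)/2 - 1/p)) =
      (fun i => w i ^ ((1:ℝ) - 2/p)) := by
    funext i
    rw [← Real.rpow_add (hw i)]
    congr 1
    ring
  have hQform : Mᵀ * M = Aᵀ * Matrix.diagonal (fun i => w i ^ ((1:ℝ) - 2/p)) * A := by
    rw [hM, Matrix.transpose_mul, Matrix.diagonal_transpose, Matrix.mul_assoc,
      ← Matrix.mul_assoc (Matrix.diagonal _), Matrix.diagonal_mul_diagonal,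
      ← Matrix.mul_assoc, hff]
  have hwe : ∀ i, (0:ℝ) < w i ^ ((1:ℝ) - 2/p) := fun i => Real.rpow_pos_of_pos (hw i) _
  have hQpd : (Mᵀ * M).PosDef := by
    rw [hQform]; exact posdef_form hinj hwe
  have hQsym : (Mᵀ * M)ᵀ = Mᵀ * M := by rw [hQform]; exact sym_form A _
  set s : ℝ := z ⬝ᵥ ((Mᵀ * M) *ᵥ z) with hs
  have hsval : s = ∑ i, w i ^ ((1:ℝ) - 2/p) * az i ^ 2 := by
    rw [hs, hQform, quad_eq]
    exact Finset.sum_congr rfl fun i _ => by rw [← haz]; ring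
  have hs0 : 0 ≤ s := by
    rw [hsval]; exact Finset.sum_nonneg fun i _ => mul_nonneg (hwe i).le (sq_nonneg _)
  have hbound : ∀ i, az i ^ 2 ≤ w i ^ ((2:ℝ)/p) * s := by
    intro i
    set u : Fin d → ℝ := (Mᵀ * M)⁻¹ *ᵥ M i with hu
    have hQQ : (Mᵀ * M) * (Mᵀ * M)⁻¹ = 1 :=
      Matrix.mul_nonsing_inv _ hQpd.det_pos.ne'.isUnit
    have hQu : (Mᵀ * M) *ᵥ u = M i := by
      rw [hu, Matrix.mulVec_mulVec, hQQ, Matrix.one_mulVec]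
    have huQu : u ⬝ᵥ ((Mᵀ * M) *ᵥ u) ≤ w i := by
      rw [hQu, dotProduct_comm]
      exact hσ i
    have hMz : (M *ᵥ z) i = u ⬝ᵥ ((Mᵀ * M) *ᵥ z) := by
      rw [← dot_sym hQsym u z, hQu, dotProduct_comm]
      rfl
    have hcs := psd_cs hQpd.posSemidef hQsym u z
    rw [← hs, ← hMz] at hcs
    have h1 : ((M *ᵥ z) i) ^ 2 ≤ w i * s :=
      le_trans hcs (mul_le_mul_of_nonneg_right huQu hs0)
    rw [hMv z i, ← haz] at h1
    have h2 : (w i ^ ((1:ℝ)/2 - 1/p)) ^ 2 = w i ^ ((1:ℝ) - 2/p) := by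
      rw [← Real.rpow_natCast (w i ^ ((1:ℝ)/2 - 1/p)) 2, ← Real.rpow_mul (hw i).le]
      congr 1
      push_cast
      ring
    have h3 : w i ^ ((1:ℝ)-2/p) * az i ^ 2 ≤ w i ^ ((1:ℝ)-2/p) * (w i ^ ((2:ℝ)/p) * s) := by
      calc w i ^ ((1:ℝ)-2/p) * az i ^ 2 = (w i ^ ((1:ℝ)/2-1/p) * az i) ^ 2 := by
            rw [mul_pow, h2]
        _ ≤ w i * s := h1
        _ = w i ^ ((1:ℝ)-2/p) * (w i ^ ((2:ℝ)/p) * s) := by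
            rw [← mul_assoc, ← Real.rpow_add (hw i),
              show (1:ℝ)-2/p + 2/p = 1 by ring, Real.rpow_one]
    exact le_of_mul_le_mul_left h3 (hwe i)
  have hps : ∀ i, (az i ^ 2) ^ (p/2) ≤ (w i ^ ((1:ℝ)-2/p) * az i ^ 2) * s ^ ((p-2)/2) := by
    intro i
    by_cases hai : az i = 0
    · rw [hai]
      norm_num [Real.zero_rpow (show p/2 ≠ 0 by positivity)]
    · have ha2 : 0 < az i ^ 2 := by positivity
      have e1 : (az i ^ 2) ^ (p/2) = (az i ^ 2) ^ ((p-2)/2) * az i ^ 2 := by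
        rw [show p/2 = (p-2)/2 + 1 by ring, Real.rpow_add ha2, Real.rpow_one]
      have h2 : (az i ^ 2) ^ ((p-2)/2) ≤ (w i ^ ((2:ℝ)/p) * s) ^ ((p-2)/2) :=
        Real.rpow_le_rpow (sq_nonneg _) (hbound i) (by positivity)
      have h3 : (w i ^ ((2:ℝ)/p) * s) ^ ((p-2)/2) = w i ^ ((1:ℝ)-2/p) * s ^ ((p-2)/2) := by
        rw [Real.mul_rpow (Real.rpow_nonneg (hw i).le _) hs0, ← Real.rpow_mul (hw i).le]
        congr 2
        field_simp
      rw [e1]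
      calc (az i ^ 2) ^ ((p-2)/2) * az i ^ 2 ≤ (w i ^ ((2:ℝ)/p) * s) ^ ((p-2)/2) * az i ^ 2 :=
            mul_le_mul_of_nonneg_right h2 (sq_nonneg _)
        _ = (w i ^ ((1:ℝ)-2/p) * az i ^ 2) * s ^ ((p-2)/2) := by rw [h3]; ring
  have hsum2 : ∑ i, (az i ^ 2) ^ (p/2) ≤ s ^ (p/2) := by
    calc ∑ i, (az i ^ 2) ^ (p/2)
        ≤ ∑ i, (w i ^ ((1:ℝ)-2/p) * az i ^ 2) * s ^ ((p-2)/2) :=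
          Finset.sum_le_sum fun i _ => hps i
      _ = s * s ^ ((p-2)/2) := by rw [← Finset.sum_mul, ← hsval]
      _ ≤ s ^ (p/2) := by
          rcases eq_or_lt_of_le hs0 with h | h
          · rw [← h, Real.zero_rpow (by positivity : p/2 ≠ 0), zero_mul]
          · rw [show p/2 = 1 + (p-2)/2 by ring, Real.rpow_add h, Real.rpow_one]
  have hconj : Real.HolderConjugate (p/(p-2)) (p/2) := by
    rw [Real.holderConjugate_iff]
    constructor
    · rw [lt_div_iff₀ hp2]; linarith
    · rw [show (p/(p-2))⁻¹ = (p-2)/p by rw [inv_div], show (p/2)⁻¹ = 2/p by rw [inv_div]]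
      field_simp
      ring
  have hH := Real.inner_le_Lp_mul_Lq_of_nonneg Finset.univ hconj
      (fun i _ => hv i) (fun i _ => sq_nonneg (az i))
  rw [one_div_div, one_div_div] at hH
  have hsum2nn : 0 ≤ ∑ i, (az i ^ 2) ^ (p/2) :=
    Finset.sum_nonneg fun i _ => Real.rpow_nonneg (sq_nonneg _) _
  have hF2 : (∑ i, (az i ^ 2) ^ (p/2)) ^ ((2:ℝ)/p) ≤ s := by
    calc (∑ i, (az i ^ 2) ^ (p/2)) ^ ((2:ℝ)/p) ≤ (s ^ (p/2)) ^ ((2:ℝ)/p) :=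
          Real.rpow_le_rpow hsum2nn hsum2 (by positivity)
      _ = s := by
          rw [← Real.rpow_mul hs0, show p/2 * (2/p) = 1 by field_simp, Real.rpow_one]
  calc ∑ i, v i * az i ^ 2
      ≤ (∑ i, v i ^ (p/(p-2))) ^ ((p-2)/p) * (∑ i, (az i ^ 2) ^ (p/2)) ^ ((2:ℝ)/p) := hH
    _ ≤ 1 * ((∑ i, (az i ^ 2) ^ (p/2)) ^ ((2:ℝ)/p)) :=
        mul_le_mul_of_nonneg_right hvnorm (Real.rpow_nonneg hsum2nn _)
    _ ≤ s := by rw [one_mul]; exact hF2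
    _ = ∑ i, w i ^ ((1:ℝ) - 2/p) * az i ^ 2 := hsval

lemma mulVec_injective_of_rank {n d : ℕ} {A : Matrix (Fin n) (Fin d) ℝ} (hA : A.rank = d) :
    ∀ x : Fin d → ℝ, A *ᵥ x = 0 → x = 0 := by
  have h2 := LinearMap.finrank_range_add_finrank_ker A.mulVecLin
  rw [show Module.finrank ℝ (LinearMap.range A.mulVecLin) = d from hA] at h2
  rw [Module.finrank_pi ℝ] at h2
  simp only [Fintype.card_fin] at h2
  have hker : LinearMap.ker A.mulVecLin = ⊥ := by
    refine Submodule.finrank_eq_zero.mp ?_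
    omega
  intro x hx
  have : x ∈ LinearMap.ker A.mulVecLin := by
    simpa [Matrix.mulVecLin_apply] using hx
  rwa [hker, Submodule.mem_bot] at this

theorem stmt6 {n d : ℕ} (A : Matrix (Fin n) (Fin d) ℝ) (hA : A.rank = d)
    (p : ℝ) (hp : 2 < p) (w : Fin n → ℝ) (hw : ∀ i, 0 < w i)
    (hσ : ∀ i, levScore (Matrix.diagonal (fun j => w j ^ ((1:ℝ)/2 - 1/p)) * A) i ≤ w i)
    (D : Fin n → ℝ)
    (hD : (Matrix.diagonal D - Matrix.diagonal (fun i => w i ^ (1 - 2/p))).PosSemidef)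
    (v : Fin n → ℝ) (hv : ∀ i, 0 ≤ v i)
    (hvnorm : (∑ i, v i ^ (p / (p - 2))) ^ ((p - 2)/p) ≤ 1)
    (g : Fin d → ℝ) (hg : g ≠ 0)
    (y : Fin d → ℝ)
    (hy : y = -(g ⬝ᵥ ((Aᵀ * Matrix.diagonal D * A)⁻¹ *ᵥ g))⁻¹ •
      ((Aᵀ * Matrix.diagonal D * A)⁻¹ *ᵥ g)) :
    (1/2) * ∑ i, v i * ((A *ᵥ y) i) ^ 2 ≤
      sInf {E : ℝ | ∃ x : Fin d → ℝ, g ⬝ᵥ x = -1 ∧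
          E = x ⬝ᵥ ((Aᵀ * (Matrix.diagonal D + Matrix.diagonal v) * A) *ᵥ x)} -
      sInf {E : ℝ | ∃ x : Fin d → ℝ, g ⬝ᵥ x = -1 ∧
          E = x ⬝ᵥ ((Aᵀ * Matrix.diagonal D * A) *ᵥ x)} := by
  have hinj : ∀ x : Fin d → ℝ, A *ᵥ x = 0 → x = 0 := mulVec_injective_of_rank hA
  have hwe : ∀ i, (0:ℝ) < w i ^ ((1:ℝ) - 2/p) := fun i => Real.rpow_pos_of_pos (hw i) _
  set Q : Matrix (Fin d) (Fin d) ℝ := Aᵀ * Matrix.diagonal D * A with hQdef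
  have hDdom : ∀ u : Fin n → ℝ,
      ∑ i, w i ^ ((1:ℝ)-2/p) * u i ^ 2 ≤ ∑ i, D i * u i ^ 2 := by
    intro u
    have h0 := hD.dotProduct_mulVec_nonneg u
    simp only [star_trivial] at h0
    rw [Matrix.sub_mulVec, dotProduct_sub] at h0
    have e1 : ∀ (f : Fin n → ℝ),
        u ⬝ᵥ (Matrix.diagonal f *ᵥ u) = ∑ i, f i * u i ^ 2 := by
      intro f
      simp only [dotProduct, Matrix.mulVec_diagonal]
      exact Finset.sum_congr rfl fun i _ => by ring
    rw [e1, e1] at h0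
    linarith
  have hQsym : Qᵀ = Q := sym_form A D
  have hQpd : Q.PosDef := by
    refine Matrix.PosDef.of_dotProduct_mulVec_pos ?_ ?_
    · rw [Matrix.IsHermitian, conjTranspose_eq_transpose_of_trivial, hQdef, sym_form]
    · intro x hx
      simp only [star_trivial]
      rw [hQdef, quad_eq]
      have hAx : A *ᵥ x ≠ 0 := fun h => hx (hinj x h)
      obtain ⟨i, hi⟩ := Function.ne_iff.mp hAx
      simp only [Pi.zero_apply] at hi
      have hgt : 0 < ∑ i, w i ^ ((1:ℝ)-2/p) * ((A *ᵥ x) i) ^ 2 := by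
        refine Finset.sum_pos' (fun j _ => mul_nonneg (hwe j).le (sq_nonneg _))
          ⟨i, Finset.mem_univ i, mul_pos (hwe i) ?_⟩
        rw [pow_two]
        exact mul_self_pos.mpr hi
      have egoal : ∑ i, D i * ((A *ᵥ x) i * (A *ᵥ x) i) = ∑ i, D i * ((A *ᵥ x) i) ^ 2 :=
        Finset.sum_congr rfl fun i _ => by ring
      rw [egoal]
      exact lt_of_lt_of_le hgt (hDdom _)
  have hdet : IsUnit Q.det := hQpd.det_pos.ne'.isUnit
  have hQQ : Q * Q⁻¹ = 1 := Matrix.mul_nonsing_inv _ hdet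
  have hc : 0 < g ⬝ᵥ (Q⁻¹ *ᵥ g) := by
    have := hQpd.inv.dotProduct_mulVec_pos hg
    simpa using this
  set c : ℝ := g ⬝ᵥ (Q⁻¹ *ᵥ g) with hc0
  have hyfeas : g ⬝ᵥ y = -1 := by
    rw [hy]
    rw [dotProduct_smul, smul_eq_mul, ← hc0]
    field_simp
  have hQy : Q *ᵥ y = (-c⁻¹) • g := by
    rw [hy, Matrix.mulVec_smul, Matrix.mulVec_mulVec, hQQ, Matrix.one_mulVec]
  have hyQy : y ⬝ᵥ (Q *ᵥ y) = c⁻¹ := by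
    rw [hQy, dotProduct_smul, smul_eq_mul, dotProduct_comm, hyfeas]
    ring
  have hdecomp : ∀ x : Fin d → ℝ, g ⬝ᵥ x = -1 →
      x ⬝ᵥ (Q *ᵥ x) = y ⬝ᵥ (Q *ᵥ y) + (x - y) ⬝ᵥ (Q *ᵥ (x - y)) := by
    intro x hx
    have hxQy : x ⬝ᵥ (Q *ᵥ y) = c⁻¹ := by
      rw [hQy, dotProduct_smul, smul_eq_mul, dotProduct_comm, hx]
      ring
    have hyQx : y ⬝ᵥ (Q *ᵥ x) = c⁻¹ := by
      rw [dot_sym hQsym]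
      exact hxQy
    have hexp : (x - y) ⬝ᵥ (Q *ᵥ (x - y)) =
        x ⬝ᵥ (Q *ᵥ x) - x ⬝ᵥ (Q *ᵥ y) - y ⬝ᵥ (Q *ᵥ x) + y ⬝ᵥ (Q *ᵥ y) := by
      simp only [Matrix.mulVec_sub, dotProduct_sub, sub_dotProduct]
      ring
    rw [hexp, hxQy, hyQx, hyQy]
    ring
  have hS2lb : ∀ E ∈ {E : ℝ | ∃ x : Fin d → ℝ, g ⬝ᵥ x = -1 ∧ E = x ⬝ᵥ (Q *ᵥ x)},
      y ⬝ᵥ (Q *ᵥ y) ≤ E := by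
    rintro E ⟨x, hx, rfl⟩
    rw [hdecomp x hx]
    have h0 := hQpd.posSemidef.dotProduct_mulVec_nonneg (x - y)
    simp only [star_trivial] at h0
    linarith
  have hymem : y ⬝ᵥ (Q *ᵥ y) ∈ {E : ℝ | ∃ x : Fin d → ℝ, g ⬝ᵥ x = -1 ∧ E = x ⬝ᵥ (Q *ᵥ x)} :=
    ⟨y, hyfeas, rfl⟩
  have hS2 : sInf {E : ℝ | ∃ x : Fin d → ℝ, g ⬝ᵥ x = -1 ∧ E = x ⬝ᵥ (Q *ᵥ x)} = y ⬝ᵥ (Q *ᵥ y) :=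
    le_antisymm (csInf_le ⟨_, hS2lb⟩ hymem) (le_csInf ⟨_, hymem⟩ hS2lb)
  have hS1lb : ∀ E ∈ {E : ℝ | ∃ x : Fin d → ℝ, g ⬝ᵥ x = -1 ∧
      E = x ⬝ᵥ ((Aᵀ * (Matrix.diagonal D + Matrix.diagonal v) * A) *ᵥ x)},
      y ⬝ᵥ (Q *ᵥ y) + (1/2) * ∑ i, v i * ((A *ᵥ y) i) ^ 2 ≤ E := by
    rintro E ⟨x, hx, rfl⟩
    have hsplit : x ⬝ᵥ ((Aᵀ * (Matrix.diagonal D + Matrix.diagonal v) * A) *ᵥ x) =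
        x ⬝ᵥ (Q *ᵥ x) + ∑ i, v i * ((A *ᵥ x) i) ^ 2 := by
      rw [Matrix.diagonal_add, quad_eq, hQdef, quad_eq, ← Finset.sum_add_distrib]
      exact Finset.sum_congr rfl fun i _ => by ring
    have hdec := hdecomp x hx
    have hDdelta : ∑ i, v i * ((A *ᵥ (x - y)) i) ^ 2 ≤ (x - y) ⬝ᵥ (Q *ᵥ (x - y)) := by
      have hδ : (x - y) ⬝ᵥ (Q *ᵥ (x - y)) =
          ∑ i, D i * ((A *ᵥ (x - y)) i * (A *ᵥ (x - y)) i) := by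
        rw [hQdef, quad_eq]
      rw [hδ]
      calc ∑ i, v i * ((A *ᵥ (x - y)) i) ^ 2
          ≤ ∑ i, w i ^ ((1:ℝ)-2/p) * ((A *ᵥ (x - y)) i) ^ 2 :=
            key_ineq A hp hw hσ hv hvnorm hinj (x - y)
        _ ≤ ∑ i, D i * ((A *ᵥ (x - y)) i) ^ 2 := hDdom _
        _ = ∑ i, D i * ((A *ᵥ (x - y)) i * (A *ᵥ (x - y)) i) :=
            Finset.sum_congr rfl fun i _ => by ring
    have hAsub : ∀ i, (A *ᵥ (x - y)) i = (A *ᵥ x) i - (A *ᵥ y) i := by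
      intro i
      rw [Matrix.mulVec_sub]
      rfl
    have hptsum : (1/2) * ∑ i, v i * ((A *ᵥ y) i) ^ 2 - ∑ i, v i * ((A *ᵥ (x - y)) i) ^ 2 ≤
        ∑ i, v i * ((A *ᵥ x) i) ^ 2 := by
      rw [Finset.mul_sum, ← Finset.sum_sub_distrib]
      apply Finset.sum_le_sum
      intro i _
      rw [hAsub i]
      nlinarith [mul_nonneg (hv i) (sq_nonneg ((A *ᵥ x) i + ((A *ᵥ x) i - (A *ᵥ y) i)))]
    rw [hsplit, hdec]
    linarith
  have hS1 : y ⬝ᵥ (Q *ᵥ y) + (1/2) * ∑ i, v i * ((A *ᵥ y) i) ^ 2 ≤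
      sInf {E : ℝ | ∃ x : Fin d → ℝ, g ⬝ᵥ x = -1 ∧
        E = x ⬝ᵥ ((Aᵀ * (Matrix.diagonal D + Matrix.diagonal v) * A) *ᵥ x)} :=
    le_csInf ⟨_, ⟨y, hyfeas, rfl⟩⟩ hS1lb
  rw [hS2]
  linarith
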